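/- (Fluctuation–decoherence relation) Let μ and ν be probability measures on ℝ, with μ having finite variance σ_E², and let λ and γ be their characteristic functions. Suppose that for all ω > 0 and all x ∈ (0, π) the characteristic-function uncertainty relation |γ(ω)|² + |λ(x/ω)|² ≤ β(x) holds, where β(x) = 2√2 (√2 − √(1 − cos x)) / (1 + cos x). Then σ_E ≥ (1/π) · sup_{ω > 0} ω |γ(ω)|. -/

import Mathlib

open MeasureTheory Real

/-- The bound function of the characteristic-function uncertainty relation of Rudnicki (2016). -/
noncomputable def rudnickiBeta (x : ℝ) : ℝ :=
  2 * Real.sqrt 2 * (Real.sqrt 2 - Real.sqrt (1 - Real.cos x)) / (1 + Real.cos x)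

/-- The characteristic function of a measure on `ℝ`. -/
noncomputable def charFunction (μ : Measure ℝ) (ω : ℝ) : ℂ :=
  ∫ E, Complex.exp (Complex.I * ω * E) ∂μ

lemma beta_eq {x : ℝ} (hx : x ∈ Set.Ioo (0:ℝ) π) :
    rudnickiBeta x = 2 / (1 + Real.sin (x/2)) := by
  obtain ⟨h0, hπ⟩ := hx
  have hs : 0 < Real.sin (x/2) := Real.sin_pos_of_pos_of_lt_pi (by linarith) (by linarith [pi_pos])
  have hc : 0 < Real.cos (x/2) := Real.cos_pos_of_mem_Ioo ⟨by linarith [pi_pos], by linarith⟩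
  have hs1 : Real.sin (x/2) < 1 := by
    nlinarith [Real.sin_sq_add_cos_sq (x/2)]
  have hcx : Real.cos x = 2 * Real.cos (x/2)^2 - 1 := by
    have := Real.cos_two_mul (x/2); rwa [show 2*(x/2) = x by ring] at this
  have h1m : 1 - Real.cos x = 2 * Real.sin (x/2)^2 := by
    rw [hcx, Real.cos_sq']; ring
  have h1p : 1 + Real.cos x = 2 * (1 - Real.sin (x/2)) * (1 + Real.sin (x/2)) := by
    rw [hcx, Real.cos_sq']; ring
  have hsqrt : Real.sqrt (1 - Real.cos x) = Real.sqrt 2 * Real.sin (x/2) := by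
    rw [h1m, Real.sqrt_mul (by norm_num), Real.sqrt_sq hs.le]
  have h2 : Real.sqrt 2 * Real.sqrt 2 = 2 := Real.mul_self_sqrt (by norm_num)
  have hnum : 2 * Real.sqrt 2 * (Real.sqrt 2 - Real.sqrt 2 * Real.sin (x/2))
      = 4 * (1 - Real.sin (x/2)) := by
    have e : 2 * Real.sqrt 2 * (Real.sqrt 2 - Real.sqrt 2 * Real.sin (x/2))
        = 2 * (Real.sqrt 2 * Real.sqrt 2) * (1 - Real.sin (x/2)) := by ring
    rw [e, h2]; ring
  rw [rudnickiBeta, hsqrt, h1p, hnum,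
    div_eq_div_iff (by nlinarith) (by nlinarith)]
  ring

lemma charFunction_norm_le_one (μ : Measure ℝ) [IsProbabilityMeasure μ] (t : ℝ) :
    ‖charFunction μ t‖ ≤ 1 := by
  calc ‖charFunction μ t‖ ≤ ∫ E, ‖Complex.exp (Complex.I * t * E)‖ ∂μ :=
        norm_integral_le_integral_norm _
    _ = 1 := by
        simp only [show ∀ E : ℝ, Complex.I * t * E = (t*E : ℝ) * Complex.I by intro E; push_cast; ring,
          Complex.norm_exp_ofReal_mul_I]
        simp

lemma integrable_exp_real_mul_I (μ : Measure ℝ) [IsProbabilityMeasure μ] (f : ℝ → ℝ)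
    (hf : Continuous f) :
    Integrable (fun E : ℝ => Complex.exp ((f E : ℝ) * Complex.I)) μ := by
  refine (integrable_const (1:ℝ)).mono' ?_ ?_
  · exact (Complex.continuous_exp.comp
      ((Complex.continuous_ofReal.comp hf).mul continuous_const)).aestronglyMeasurable
  · filter_upwards with x
    rw [Complex.norm_exp_ofReal_mul_I]

lemma charFunction_lower (μ : Measure ℝ) [IsProbabilityMeasure μ]
    (h2 : Integrable (fun E => E ^ 2) μ) (t : ℝ) :
    1 - t^2 * ((∫ E, E ^ 2 ∂μ) - (∫ E, E ∂μ) ^ 2) / 2 ≤ ‖charFunction μ t‖ := by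
  set m := ∫ E, E ∂μ with hm
  have hE : Integrable (fun E : ℝ => E) μ := by
    refine (h2.add (integrable_const 1)).mono' aestronglyMeasurable_id ?_
    filter_upwards with x
    simp only [Real.norm_eq_abs, Pi.add_apply]
    nlinarith [abs_nonneg x, sq_abs x, sq_nonneg (|x| - 1)]
  have hsq : Integrable (fun E : ℝ => (E - m)^2) μ := by
    have e : (fun E : ℝ => (E - m)^2) = fun E => E^2 - (2*m)*E + m^2 := by
      funext E; ring
    rw [e]
    exact (h2.sub (hE.const_mul (2*m))).add (integrable_const _)
  have hB : Integrable (fun E : ℝ => (2*m)*E) μ := hE.const_mul (2*m)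
  have hA : Integrable (fun E : ℝ => E^2 - (2*m)*E) μ := h2.sub hB
  have hvar : ∫ E, (E - m)^2 ∂μ = (∫ E, E ^ 2 ∂μ) - m^2 := by
    have e : (fun E : ℝ => (E - m)^2) = fun E => (E^2 - (2*m)*E) + m^2 := by
      funext E; ring
    rw [e, integral_add hA (integrable_const _), integral_sub h2 hB,
      integral_const_mul, integral_const]
    simp [← hm]; ring
  have hre : (Complex.exp (-(t*m : ℝ) * Complex.I) * charFunction μ t).re
      = ∫ E, Real.cos (t * (E - m)) ∂μ := by
    rw [charFunction, ← integral_const_mul]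
    have e : ∀ E : ℝ, Complex.exp (-(t*m : ℝ) * Complex.I) * Complex.exp (Complex.I * t * E)
        = Complex.exp ((t * (E - m) : ℝ) * Complex.I) := by
      intro E; rw [← Complex.exp_add]; push_cast; ring_nf
    simp only [e]
    rw [show (∫ a, Complex.exp ((t * (a - m) : ℝ) * Complex.I) ∂μ).re
        = RCLike.re (∫ a, Complex.exp ((t * (a - m) : ℝ) * Complex.I) ∂μ) from rfl,
      ← integral_re (integrable_exp_real_mul_I μ (fun E => t*(E-m)) (by continuity))]
    congr 1; funext E
    exact Complex.exp_ofReal_mul_I_re _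
  have hcos : Integrable (fun E : ℝ => Real.cos (t * (E - m))) μ := by
    refine (integrable_const (1:ℝ)).mono'
      ((Real.continuous_cos.comp (by continuity)).aestronglyMeasurable) ?_
    filter_upwards with x
    rw [Real.norm_eq_abs]; exact Real.abs_cos_le_one _
  have hlow : Integrable (fun E : ℝ => 1 - t^2/2 * (E - m)^2) μ :=
    (integrable_const 1).sub (hsq.const_mul _)
  calc 1 - t^2 * ((∫ E, E ^ 2 ∂μ) - m ^ 2) / 2
      = ∫ E, (1 - t^2/2 * (E - m)^2) ∂μ := by
        rw [integral_sub (integrable_const 1) (hsq.const_mul _), integral_const,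
          integral_const_mul, hvar]
        simp; ring
    _ ≤ ∫ E, Real.cos (t * (E - m)) ∂μ := by
        refine integral_mono hlow hcos fun E => ?_
        have := Real.one_sub_sq_div_two_le_cos (x := t * (E - m))
        nlinarith
    _ = (Complex.exp (-(t*m : ℝ) * Complex.I) * charFunction μ t).re := hre.symm
    _ ≤ ‖Complex.exp (-(t*m : ℝ) * Complex.I) * charFunction μ t‖ := by
        exact Complex.re_le_norm _
    _ = ‖charFunction μ t‖ := by
        rw [norm_mul, show (-(t*m : ℝ) : ℂ) * Complex.I = ((-(t*m) : ℝ) : ℂ) * Complex.I by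
          push_cast; ring, Complex.norm_exp_ofReal_mul_I, one_mul]

lemma variance_nonneg (μ : Measure ℝ) [IsProbabilityMeasure μ]
    (h2 : Integrable (fun E => E ^ 2) μ) :
    0 ≤ (∫ E, E ^ 2 ∂μ) - (∫ E, E ∂μ) ^ 2 := by
  set m := ∫ E, E ∂μ with hm
  have hE : Integrable (fun E : ℝ => E) μ := by
    refine (h2.add (integrable_const 1)).mono' aestronglyMeasurable_id ?_
    filter_upwards with x
    simp only [Real.norm_eq_abs, Pi.add_apply]
    nlinarith [abs_nonneg x, sq_abs x, sq_nonneg (|x| - 1)]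
  have hB : Integrable (fun E : ℝ => (2*m)*E) μ := hE.const_mul (2*m)
  have hA : Integrable (fun E : ℝ => E^2 - (2*m)*E) μ := h2.sub hB
  have hvar : ∫ E, (E - m)^2 ∂μ = (∫ E, E ^ 2 ∂μ) - m^2 := by
    have e : (fun E : ℝ => (E - m)^2) = fun E => (E^2 - (2*m)*E) + m^2 := by
      funext E; ring
    rw [e, integral_add hA (integrable_const _), integral_sub h2 hB,
      integral_const_mul, integral_const]
    simp [← hm]; ring
  rw [← hvar]
  exact integral_nonneg fun E => sq_nonneg _

/-- Fluctuation–decoherence relation: If the characteristic-function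
uncertainty relation `|γ(ω)|² + |λ(x/ω)|² ≤ β(x)` holds for all `ω > 0` and `x ∈ (0, π)`,
then `σ_E ≥ (1/π) · sup_{ω > 0} ω |γ(ω)|` (the supremum taken in `ℝ≥0∞`). -/
theorem stmt_6 (μ ν : Measure ℝ) [IsProbabilityMeasure μ] [IsProbabilityMeasure ν]
    (h2 : Integrable (fun E => E ^ 2) μ)
    (hChUR : ∀ ω > (0 : ℝ), ∀ x ∈ Set.Ioo (0 : ℝ) π,
      ‖charFunction ν ω‖ ^ 2 + ‖charFunction μ (x / ω)‖ ^ 2 ≤ rudnickiBeta x) :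
    ENNReal.ofReal (1 / π) *
        (⨆ ω : {w : ℝ // 0 < w}, ENNReal.ofReal ((ω : ℝ) * ‖charFunction ν ω‖))
      ≤ ENNReal.ofReal (Real.sqrt ((∫ E, E ^ 2 ∂μ) - (∫ E, E ∂μ) ^ 2)) := by
  set V := (∫ E, E ^ 2 ∂μ) - (∫ E, E ∂μ) ^ 2 with hV
  have hVnn : 0 ≤ V := variance_nonneg μ h2
  have key : ∀ ω > (0:ℝ), ω * ‖charFunction ν ω‖ ≤ π * Real.sqrt V := by
    intro ω hω
    have hsqb : ‖charFunction ν ω‖^2 ≤ π^2 * V / ω^2 := by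
      refine le_of_forall_pos_le_add fun ε hε => ?_
      set δ := min (Real.sqrt (8*ε)) (π/2) with hδ
      have hδ0 : 0 < δ := lt_min (Real.sqrt_pos.2 (by linarith)) (by positivity)
      have hδπ : δ < π := lt_of_le_of_lt (min_le_right _ _) (by linarith [pi_pos])
      set x := π - δ with hxdef
      have hx : x ∈ Set.Ioo (0:ℝ) π := ⟨by rw [hxdef]; linarith, by rw [hxdef]; linarith⟩
      have hC := hChUR ω hω x hx
      have hsin : Real.sin (x/2) = Real.cos (δ/2) := by
        rw [show x/2 = π/2 - δ/2 by rw [hxdef]; ring, Real.sin_pi_div_two_sub]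
      have hδε : δ^2 ≤ 8*ε := by
        have h1 : δ ≤ Real.sqrt (8*ε) := min_le_left _ _
        nlinarith [Real.sq_sqrt (show (0:ℝ) ≤ 8*ε by linarith)]
      have hcosb : 1 - δ^2/8 ≤ Real.sin (x/2) := by
        rw [hsin]
        have := Real.one_sub_sq_div_two_le_cos (x := δ/2); nlinarith
      have hβ : rudnickiBeta x ≤ 1 + ε := by
        rw [beta_eq hx]
        have hspos : 0 < Real.sin (x/2) :=
          Real.sin_pos_of_pos_of_lt_pi (by linarith [hx.1]) (by linarith [hx.2, pi_pos])
        have hδ2 : δ ≤ 2 := le_trans (min_le_right _ _) (by linarith [Real.pi_le_four])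
        have hd4 : δ^2 ≤ 4 := by nlinarith
        rw [div_le_iff₀ (by linarith : (0:ℝ) < 1 + Real.sin (x/2))]
        have hp1 := mul_le_mul_of_nonneg_left hcosb (show (0:ℝ) ≤ 1+ε by linarith)
        have hp2 := mul_le_mul_of_nonneg_right hd4 hε.le
        nlinarith [hδε]
      have hlam := charFunction_lower μ h2 (x/ω)
      have hlamsq : 1 - (x/ω)^2 * V ≤ ‖charFunction μ (x/ω)‖^2 := by
        rw [← hV] at hlam
        by_cases h : (x/ω)^2 * V / 2 ≤ 1
        · have hlam' : 1 - (x/ω)^2 * V / 2 ≤ ‖charFunction μ (x/ω)‖ := by linarith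
          nlinarith [mul_le_mul hlam' hlam' (by linarith) (norm_nonneg _),
            sq_nonneg ((x/ω)^2 * V)]
        · nlinarith [sq_nonneg ‖charFunction μ (x/ω)‖]
      have hxbound : (x/ω)^2 * V ≤ π^2 * V / ω^2 := by
        have hxπ : x^2 ≤ π^2 := by nlinarith [hx.1, hx.2]
        rw [div_pow, div_mul_eq_mul_div, div_le_div_iff_of_pos_right (by positivity)]
        exact mul_le_mul_of_nonneg_right hxπ hVnn
      linarith
    have hω2 : 0 < ω^2 := by positivity
    have h' : ‖charFunction ν ω‖^2 * ω^2 ≤ π^2 * V := (le_div_iff₀ hω2).1 hsqb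
    have h1 : (ω * ‖charFunction ν ω‖)^2 ≤ (π * Real.sqrt V)^2 := by
      rw [mul_pow, mul_pow, Real.sq_sqrt hVnn]
      nlinarith
    calc ω * ‖charFunction ν ω‖
        = Real.sqrt ((ω * ‖charFunction ν ω‖)^2) := (Real.sqrt_sq (by positivity)).symm
      _ ≤ Real.sqrt ((π * Real.sqrt V)^2) := Real.sqrt_le_sqrt h1
      _ = π * Real.sqrt V := Real.sqrt_sq (by positivity)
  rw [ENNReal.mul_iSup]
  refine iSup_le ?_
  rintro ⟨ω, hω⟩
  rw [← ENNReal.ofReal_mul (by positivity)]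
  refine ENNReal.ofReal_le_ofReal ?_
  rw [one_div, inv_mul_le_iff₀ pi_pos]
  exact key ω hω
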